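/- The Legendre transform of the log-moment generating function of a geometric distribution of mean ρ is given explicitly by: for a > 0, sup_{λ∈ℝ} { λa − log M_ρ(λ) } = a·log( a(1+ρ) / (ρ(1+a)) ) − log( (1+a)/(1+ρ) ), where M_ρ(λ) = 1/(1 − ρ(e^λ − 1)) for λ < log((1+ρ)/ρ) and +∞ otherwise. -/

import Mathlib

/-- The Legendre transform of the log-moment generating function of a
geometric distribution of mean ρ: for a > 0,
sup_{λ} { λa − log M_ρ(λ) } = a log(a(1+ρ)/(ρ(1+a))) − log((1+a)/(1+ρ)).
Since M_ρ(λ) = +∞ for λ ≥ log((1+ρ)/ρ) (contributing −∞ to the supremum), the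
supremum is over the domain of finiteness λ < log((1+ρ)/ρ). -/
theorem stmt4 (ρ a : ℝ) (hρ : 0 < ρ) (ha : 0 < a) :
    IsLUB {y : ℝ | ∃ l : ℝ, l < Real.log ((1 + ρ) / ρ) ∧
        y = l * a - Real.log (1 / (1 - ρ * (Real.exp l - 1)))}
      (a * Real.log (a * (1 + ρ) / (ρ * (1 + a))) - Real.log ((1 + a) / (1 + ρ))) := by
  have hρ1 : (0:ℝ) < 1 + ρ := by linarith
  have ha1 : (0:ℝ) < 1 + a := by linarith
  set L := Real.log (a * (1 + ρ) / (ρ * (1 + a))) with hLdef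
  have hpos : (0:ℝ) < a * (1 + ρ) / (ρ * (1 + a)) := by positivity
  have heL : Real.exp L = a * (1 + ρ) / (ρ * (1 + a)) := Real.exp_log hpos
  have hgL : 1 - ρ * (Real.exp L - 1) = (1 + ρ) / (1 + a) := by
    rw [heL]; field_simp; ring
  have hLlt : L < Real.log ((1 + ρ) / ρ) := by
    apply Real.log_lt_log hpos
    rw [div_lt_div_iff₀ (by positivity) hρ]
    nlinarith
  constructor
  · rintro y ⟨l, hl, rfl⟩
    have hEl : Real.exp l < (1 + ρ) / ρ := by
      calc Real.exp l < Real.exp (Real.log ((1 + ρ) / ρ)) := Real.exp_lt_exp.2 hl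
        _ = (1 + ρ) / ρ := Real.exp_log (by positivity)
    have hg : (0:ℝ) < 1 - ρ * (Real.exp l - 1) := by
      rw [lt_div_iff₀ hρ] at hEl; nlinarith
    have hgs : (0:ℝ) < (1 + ρ) / (1 + a) := by positivity
    have hlog1 : Real.log (1 / (1 - ρ * (Real.exp l - 1)))
        = - Real.log (1 - ρ * (Real.exp l - 1)) := by
      rw [one_div, Real.log_inv]
    have hdiv : Real.log ((1 - ρ * (Real.exp l - 1)) / ((1 + ρ) / (1 + a)))
        ≤ (1 - ρ * (Real.exp l - 1)) / ((1 + ρ) / (1 + a)) - 1 :=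
      Real.log_le_sub_one_of_pos (by positivity)
    rw [Real.log_div hg.ne' hgs.ne'] at hdiv
    have hid : ρ * Real.exp l * (1 + a) = a * (1 + ρ) * Real.exp (l - L) := by
      have h2 : Real.exp l = Real.exp L * Real.exp (l - L) := by
        rw [← Real.exp_add]; ring_nf
      rw [h2, heL]; field_simp
    have hexp : l - L + 1 ≤ Real.exp (l - L) := Real.add_one_le_exp _
    have hlogq : Real.log ((1 + a) / (1 + ρ)) = - Real.log ((1 + ρ) / (1 + a)) := by
      rw [← Real.log_inv]; congr 1; field_simp
    have hfrac : (1 - ρ * (Real.exp l - 1)) / ((1 + ρ) / (1 + a))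
        = (1 - ρ * (Real.exp l - 1)) * (1 + a) / (1 + ρ) := by
      field_simp
    rw [hfrac] at hdiv
    have hkey : (1 - ρ * (Real.exp l - 1)) * (1 + a) / (1 + ρ)
        = (1 + a) - a * Real.exp (l - L) := by
      rw [div_eq_iff hρ1.ne']; nlinarith [hid]
    rw [hkey] at hdiv
    rw [hlog1, hlogq]
    nlinarith [hdiv, hexp, mul_le_mul_of_nonneg_left hexp ha.le]
  · intro b hb
    apply hb
    refine ⟨L, hLlt, ?_⟩
    rw [hgL, one_div_div, mul_comm]
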